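/- Differentiating the formal power series identity ∑_{k≥n} C(k,n) x^k = x^n/(1-x)^{n+1} once with respect to an auxiliary parameter, one obtains: ∑_{k≥1}∑_{l≥1}∑_{n=1}^{min(k,l)} n·C(k,n)·C(l,n)·x₁^k·x₂^l·x₃^{n-1} = x₁x₂ / ((1-x₁)(1-x₂) - x₁x₂x₃)² as formal power series. -/

import Mathlib

open MvPowerSeries

/-- The formal power series
`∑_{k≥1}∑_{l≥1}∑_{n=1}^{min(k,l)} n·C(k,n)·C(l,n)·x₁^k·x₂^l·x₃^{n-1}`
in variables `x₁ = X 0`, `x₂ = X 1`, `x₃ = X 2` over `ℚ`: the coefficient of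
`x₁^k x₂^l x₃^j` is `(j+1)·C(k,j+1)·C(l,j+1)` when `k,l ≥ 1` and `j+1 ≤ min(k,l)`. -/
noncomputable def diffBinomialSeries : MvPowerSeries (Fin 3) ℚ :=
  fun m =>
    if 1 ≤ m 0 ∧ 1 ≤ m 1 ∧ m 2 + 1 ≤ min (m 0) (m 1) then
      ((m 2 + 1 : ℚ)) * ((m 0).choose (m 2 + 1)) * ((m 1).choose (m 2 + 1))
    else 0

open Finsupp

noncomputable def Fser : MvPowerSeries (Fin 3) ℚ :=
  fun m => ((m 0).choose (m 2) : ℚ) * ((m 1).choose (m 2) : ℚ)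

noncomputable def Dser : MvPowerSeries (Fin 3) ℚ :=
  (1 - X 0) * (1 - X 1) - X 0 * X 1 * X 2

lemma h01 : (X 0 * X 1 : MvPowerSeries (Fin 3) ℚ)
    = monomial (single 0 1 + single 1 1) 1 := by
  rw [X_def, X_def, monomial_mul_monomial, one_mul]

lemma h012 : (X 0 * X 1 * X 2 : MvPowerSeries (Fin 3) ℚ)
    = monomial (single 0 1 + single 1 1 + single 2 1) 1 := by
  rw [h01, X_def, monomial_mul_monomial, one_mul]

lemma Dser_eq : Dser = 1 - monomial (single 0 1) 1 - monomial (single 1 1) 1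
    + monomial (single 0 1 + single 1 1) 1
    - monomial (single 0 1 + single 1 1 + single 2 1) 1 := by
  rw [← h01, ← h012, ← X_def, ← X_def, Dser]; ring

lemma le_single0 (m : Fin 3 →₀ ℕ) : single 0 1 ≤ m ↔ 1 ≤ m 0 := Finsupp.single_le_iff

lemma le_single1 (m : Fin 3 →₀ ℕ) : single 1 1 ≤ m ↔ 1 ≤ m 1 := Finsupp.single_le_iff

lemma le_s01 (m : Fin 3 →₀ ℕ) : single 0 1 + single 1 1 ≤ m ↔ 1 ≤ m 0 ∧ 1 ≤ m 1 := by
  rw [Finsupp.le_def]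
  constructor
  · intro h
    exact ⟨by simpa using h 0, by simpa using h 1⟩
  · rintro ⟨h0, h1⟩ i
    fin_cases i <;> simp [Finsupp.single_apply] <;> omega

lemma le_s012 (m : Fin 3 →₀ ℕ) : single 0 1 + single 1 1 + single 2 1 ≤ m ↔
    1 ≤ m 0 ∧ 1 ≤ m 1 ∧ 1 ≤ m 2 := by
  rw [Finsupp.le_def]
  constructor
  · intro h
    exact ⟨by simpa using h 0, by simpa using h 1, by simpa using h 2⟩
  · rintro ⟨h0, h1, h2⟩ i
    fin_cases i <;> simp [Finsupp.single_apply] <;> omega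

lemma sub_apply0 (m : Fin 3 →₀ ℕ) :
    (((m - single 0 1 : Fin 3 →₀ ℕ)) 0 = m 0 - 1) ∧ (((m - single 0 1 : Fin 3 →₀ ℕ)) 1 = m 1) ∧ (((m - single 0 1 : Fin 3 →₀ ℕ)) 2 = m 2) := by
  refine ⟨?_, ?_, ?_⟩ <;> simp [Finsupp.tsub_apply, Finsupp.single_apply]

lemma sub_apply1 (m : Fin 3 →₀ ℕ) :
    (((m - single 1 1 : Fin 3 →₀ ℕ)) 0 = m 0) ∧ (((m - single 1 1 : Fin 3 →₀ ℕ)) 1 = m 1 - 1) ∧ (((m - single 1 1 : Fin 3 →₀ ℕ)) 2 = m 2) := by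
  refine ⟨?_, ?_, ?_⟩ <;> simp [Finsupp.tsub_apply, Finsupp.single_apply]

lemma sub_apply01 (m : Fin 3 →₀ ℕ) :
    (((m - (single 0 1 + single 1 1) : Fin 3 →₀ ℕ)) 0 = m 0 - 1) ∧ (((m - (single 0 1 + single 1 1) : Fin 3 →₀ ℕ)) 1 = m 1 - 1)
      ∧ (((m - (single 0 1 + single 1 1) : Fin 3 →₀ ℕ)) 2 = m 2) := by
  refine ⟨?_, ?_, ?_⟩ <;> simp [Finsupp.tsub_apply, Finsupp.single_apply]

lemma sub_apply012 (m : Fin 3 →₀ ℕ) :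
    (((m - (single 0 1 + single 1 1 + single 2 1) : Fin 3 →₀ ℕ)) 0 = m 0 - 1) ∧
    (((m - (single 0 1 + single 1 1 + single 2 1) : Fin 3 →₀ ℕ)) 1 = m 1 - 1) ∧
    (((m - (single 0 1 + single 1 1 + single 2 1) : Fin 3 →₀ ℕ)) 2 = m 2 - 1) := by
  refine ⟨?_, ?_, ?_⟩ <;> simp [Finsupp.tsub_apply, Finsupp.single_apply]

lemma coeff_mul_D (φ : MvPowerSeries (Fin 3) ℚ) (m : Fin 3 →₀ ℕ) :
    coeff m (φ * Dser) =
      coeff m φ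
      - (if 1 ≤ m 0 then coeff (m - single 0 1) φ else 0)
      - (if 1 ≤ m 1 then coeff (m - single 1 1) φ else 0)
      + (if 1 ≤ m 0 ∧ 1 ≤ m 1 then coeff (m - (single 0 1 + single 1 1)) φ else 0)
      - (if 1 ≤ m 0 ∧ 1 ≤ m 1 ∧ 1 ≤ m 2 then
          coeff (m - (single 0 1 + single 1 1 + single 2 1)) φ else 0) := by
  rw [Dser_eq]
  simp only [mul_sub, mul_add, mul_one, map_sub, map_add, coeff_mul_monomial, mul_one,
    le_single0, le_single1, le_s01, le_s012]

lemma coeff_F (m : Fin 3 →₀ ℕ) :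
    coeff m Fser = ((m 0).choose (m 2) : ℚ) * ((m 1).choose (m 2) : ℚ) := rfl

lemma coeff_S (m : Fin 3 →₀ ℕ) :
    coeff m diffBinomialSeries =
      ((m 2 : ℚ) + 1) * ((m 0).choose (m 2 + 1) : ℚ) * ((m 1).choose (m 2 + 1) : ℚ) := by
  show diffBinomialSeries m = _
  rw [diffBinomialSeries]
  split
  · push_cast; ring
  · rename_i h
    by_cases h0 : m 0 < m 2 + 1
    · rw [Nat.choose_eq_zero_of_lt h0]; push_cast; ring
    · have h1 : m 1 < m 2 + 1 := by omega
      rw [Nat.choose_eq_zero_of_lt h1]; push_cast; ring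

lemma hFD : Fser * Dser = 1 := by
  ext m
  rw [coeff_mul_D, coeff_one]
  have hm0 : (m = 0) = (m 0 = 0 ∧ m 1 = 0 ∧ m 2 = 0) := by
    apply propext
    constructor
    · intro h; simp [h]
    · rintro ⟨h0, h1, h2⟩
      ext i; fin_cases i <;> simpa
  simp only [coeff_F, (sub_apply0 m).1, (sub_apply0 m).2.1, (sub_apply0 m).2.2,
    (sub_apply1 m).1, (sub_apply1 m).2.1, (sub_apply1 m).2.2,
    (sub_apply01 m).1, (sub_apply01 m).2.1, (sub_apply01 m).2.2,
    (sub_apply012 m).1, (sub_apply012 m).2.1, (sub_apply012 m).2.2, hm0]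
  generalize m 0 = k
  generalize m 1 = l
  generalize m 2 = n
  rcases k with _ | k <;> rcases l with _ | l <;> rcases n with _ | n <;>
    simp [Nat.choose_succ_succ] <;> push_cast <;> ring

lemma hSD : diffBinomialSeries * Dser = X 0 * X 1 * Fser := by
  ext m
  rw [coeff_mul_D, h01, coeff_monomial_mul]
  simp only [coeff_S, coeff_F, le_s01, one_mul,
    (sub_apply0 m).1, (sub_apply0 m).2.1, (sub_apply0 m).2.2,
    (sub_apply1 m).1, (sub_apply1 m).2.1, (sub_apply1 m).2.2,
    (sub_apply01 m).1, (sub_apply01 m).2.1, (sub_apply01 m).2.2,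
    (sub_apply012 m).1, (sub_apply012 m).2.1, (sub_apply012 m).2.2]
  generalize m 0 = k
  generalize m 1 = l
  generalize m 2 = n
  rcases k with _ | k <;> rcases l with _ | l <;> rcases n with _ | n <;>
    simp [Nat.choose_succ_succ] <;> push_cast <;> ring

lemma hDconst : constantCoeff Dser ≠ 0 := by
  simp [Dser]

/-- `∑_{k≥1}∑_{l≥1}∑_{n=1}^{min(k,l)} n C(k,n) C(l,n) x₁^k x₂^l x₃^{n-1}
      = x₁x₂ / ((1-x₁)(1-x₂) - x₁x₂x₃)²` as formal power series. -/
theorem statement3 :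
    diffBinomialSeries =
      MvPowerSeries.X (0 : Fin 3) * MvPowerSeries.X 1 *
        ((((1 - MvPowerSeries.X (0 : Fin 3)) * (1 - MvPowerSeries.X 1)) -
          MvPowerSeries.X 0 * MvPowerSeries.X 1 * MvPowerSeries.X 2)⁻¹) ^ 2 := by
  have hFinv : Fser = Dser⁻¹ := (MvPowerSeries.eq_inv_iff_mul_eq_one hDconst).2 hFD
  have : diffBinomialSeries = X 0 * X 1 * (Dser⁻¹) ^ 2 := by
    calc diffBinomialSeries = diffBinomialSeries * (Dser * Dser⁻¹) := by
          rw [MvPowerSeries.mul_inv_cancel _ hDconst, mul_one]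
      _ = (diffBinomialSeries * Dser) * Dser⁻¹ := by ring
      _ = X 0 * X 1 * (Dser⁻¹) ^ 2 := by rw [hSD, hFinv]; ring
  exact this
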